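/- Let τ : A → B be a natural transformation of functors A, B : S → Set. Then τ is weakly cartesian (each naturality square at a surjection of finite sets is a weak pullback) if and only if the induced transformation τ̂ : Â → B̂ of endofunctors of Set is weakly cartesian (each naturality square at any function is a weak pullback). -/

import Mathlib

/-- A functor from the skeleton `S` of finite sets and surjections to `Set`:
a family of sets with a functorial action of surjections. -/
structure SFunctor where
  obj : ℕ → Type
  map : ∀ {n m : ℕ} (f : Fin n → Fin m), Function.Surjective f → obj n → obj m
  map_id : ∀ {n : ℕ} (a : obj n), map id Function.surjective_id a = a
  map_map : ∀ {n m k : ℕ} (f : Fin n → Fin m) (hf : Function.Surjective f)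
      (g : Fin m → Fin k) (hg : Function.Surjective g) (a : obj n),
      map g hg (map f hf a) = map (g ∘ f) (hg.comp hf) a

/-- The relation identifying `(x⃗ ∘ σ, a)` with `(x⃗, σ · a)` for bijections `σ`,
on pairs of an injection `Fin n → X` and an element of `A(n)`. -/
def HatRel (A : SFunctor) (X : Type) :
    (Σ n : ℕ, {x : Fin n → X // Function.Injective x} × A.obj n) →
    (Σ n : ℕ, {x : Fin n → X // Function.Injective x} × A.obj n) → Prop :=
  fun p q => ∃ e : Fin p.1 ≃ Fin q.1,
    (∀ i, q.2.1.1 (e i) = p.2.1.1 i) ∧ A.map e e.surjective p.2.2 = q.2.2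

/-- `Â(X) = Σ_n [X over n] ⊗_{S_n} A(n)`. -/
def HatA (A : SFunctor) (X : Type) : Type := Quot (HatRel A X)

/-- The class `[x⃗, a]` in `Â(X)`. -/
def hatMk (A : SFunctor) {X : Type} {n : ℕ} (x : Fin n → X) (hx : Function.Injective x)
    (a : A.obj n) : HatA A X :=
  Quot.mk _ ⟨n, ⟨x, hx⟩, a⟩

/-- The characterizing property of the action of `Â` on functions:
`Â(f)([x⃗,a]) = [y⃗, A(α)(a)]` whenever `f ∘ x⃗ = y⃗ ∘ α` is an epi-mono factorization. -/
def HatMapSpec (A : SFunctor)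
    (F : ∀ (X Y : Type), (X → Y) → HatA A X → HatA A Y) : Prop :=
  ∀ (X Y : Type) (f : X → Y) (n m : ℕ) (x : Fin n → X) (hx : Function.Injective x)
    (a : A.obj n) (α : Fin n → Fin m) (hα : Function.Surjective α)
    (y : Fin m → Y) (hy : Function.Injective y),
    (∀ i, f (x i) = y (α i)) →
    F X Y f (hatMk A x hx a) = hatMk A y hy (A.map α hα a)

/-- A commutative square of sets which is a pullback (elementwise formulation). -/
def IsSetPullback {P A B C : Type} (pa : P → A) (pb : P → B) (f : A → C) (g : B → C) : Prop :=
  (∀ p, f (pa p) = g (pb p)) ∧ ∀ a b, f a = g b → ∃! p, pa p = a ∧ pb p = b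

/-- A commutative square of sets which is a weak pullback (elementwise formulation). -/
def IsWeakSetPullback {P A B C : Type} (pa : P → A) (pb : P → B) (f : A → C) (g : B → C) : Prop :=
  (∀ p, f (pa p) = g (pb p)) ∧ ∀ a b, f a = g b → ∃ p, pa p = a ∧ pb p = b

/-- Naturality of a family `τ n : A(n) → B(n)` with respect to surjections. -/
def SNatTrans (A B : SFunctor) (τ : ∀ n, A.obj n → B.obj n) : Prop :=
  ∀ (n m : ℕ) (f : Fin n → Fin m) (hf : Function.Surjective f) (a : A.obj n),
    τ m (A.map f hf a) = B.map f hf (τ n a)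

/-- The characterizing property of `τ̂ : Â → B̂`, namely `τ̂_X([x⃗,a]) = [x⃗, τ(a)]`. -/
def HatTransSpec (A B : SFunctor) (τ : ∀ n, A.obj n → B.obj n)
    (t : ∀ X : Type, HatA A X → HatA B X) : Prop :=
  ∀ (X : Type) (n : ℕ) (x : Fin n → X) (hx : Function.Injective x) (a : A.obj n),
    t X (hatMk A x hx a) = hatMk B x hx (τ n a)

section Aux

lemma SFunctor.map_congr (A : SFunctor) {n m : ℕ} {f g : Fin n → Fin m} (h : f = g)
    (hf : Function.Surjective f) (hg : Function.Surjective g) (a : A.obj n) :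
    A.map f hf a = A.map g hg a := by subst h; rfl

lemma hatRel_equivalence (A : SFunctor) (X : Type) : Equivalence (HatRel A X) := by
  constructor
  · rintro ⟨n, ⟨x, hx⟩, a⟩
    exact ⟨Equiv.refl _, fun i => rfl,
      (A.map_congr (by funext i; rfl) _ Function.surjective_id a).trans (A.map_id a)⟩
  · rintro ⟨n, ⟨x, hx⟩, a⟩ ⟨m, ⟨y, hy⟩, b⟩ ⟨e, hxy, hab⟩
    refine ⟨e.symm, fun i => ?_, ?_⟩
    · have := hxy (e.symm i)
      simpa using this.symm
    · rw [← hab, A.map_map]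
      exact (A.map_congr (funext fun i => e.symm_apply_apply i) _ Function.surjective_id a).trans
        (A.map_id a)
  · rintro ⟨n, ⟨x, hx⟩, a⟩ ⟨m, ⟨y, hy⟩, b⟩ ⟨k, ⟨z, hz⟩, c⟩ ⟨e, hxy, hab⟩ ⟨e', hyz, hbc⟩
    refine ⟨e.trans e', fun i => ?_, ?_⟩
    · simpa [Equiv.trans] using (hyz (e i)).trans (hxy i)
    · rw [← hbc, ← hab, A.map_map]
      exact A.map_congr (by funext i; rfl) _ _ a

lemma hatMk_eq_iff (A : SFunctor) {X : Type} {n m : ℕ} (x : Fin n → X)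
    (hx : Function.Injective x) (a : A.obj n) (y : Fin m → X)
    (hy : Function.Injective y) (b : A.obj m) :
    hatMk A x hx a = hatMk A y hy b ↔
      HatRel A X ⟨n, ⟨x, hx⟩, a⟩ ⟨m, ⟨y, hy⟩, b⟩ := by
  show Quot.mk (HatRel A X) _ = Quot.mk (HatRel A X) _ ↔ _
  rw [Quot.eq]
  exact (hatRel_equivalence A X).eqvGen_iff

lemma exists_epi_mono_fact {n : ℕ} {Y : Type} (g : Fin n → Y) :
    ∃ (m : ℕ) (α : Fin n → Fin m) (hα : Function.Surjective α)
      (y : Fin m → Y) (_ : Function.Injective y), ∀ i, g i = y (α i) := by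
  classical
  have hfin : (Set.range g).Finite := Set.finite_range g
  haveI : Fintype (Set.range g) := hfin.fintype
  let e : Set.range g ≃ Fin (Fintype.card (Set.range g)) := Fintype.equivFin _
  refine ⟨_, fun i => e ⟨g i, Set.mem_range_self i⟩, ?_, fun j => (e.symm j).1,
    Subtype.val_injective.comp e.symm.injective, fun i => by
      show g i = ↑(e.symm (e ⟨g i, Set.mem_range_self i⟩))
      rw [e.symm_apply_apply]⟩
  intro j
  obtain ⟨i, hi⟩ := (e.symm j).2
  refine ⟨i, ?_⟩
  show e ⟨g i, Set.mem_range_self i⟩ = j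
  rw [show (⟨g i, Set.mem_range_self i⟩ : Set.range g) = e.symm j from Subtype.ext hi,
    e.apply_symm_apply]

end Aux

/-- A natural transformation `τ : A → B` of functors on `S` is weakly
cartesian iff the induced transformation `τ̂ : Â → B̂` is weakly cartesian. -/
theorem weakly_cartesian_iff_hat_weakly_cartesian (A B : SFunctor)
    (τ : ∀ n, A.obj n → B.obj n) (hτ : SNatTrans A B τ)
    (FA : ∀ (X Y : Type), (X → Y) → HatA A X → HatA A Y) (hFA : HatMapSpec A FA)
    (FB : ∀ (X Y : Type), (X → Y) → HatA B X → HatA B Y) (hFB : HatMapSpec B FB)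
    (t : ∀ X : Type, HatA A X → HatA B X) (ht : HatTransSpec A B τ t) :
    (∀ (n m : ℕ) (f : Fin n → Fin m) (hf : Function.Surjective f),
      IsWeakSetPullback (τ n) (A.map f hf) (B.map f hf) (τ m)) ↔
    (∀ (X Y : Type) (f : X → Y),
      IsWeakSetPullback (t X) (FA X Y f) (FB X Y f) (t Y)) := by
  constructor
  · -- τ weakly cartesian → τ̂ weakly cartesian
    intro h X Y f
    constructor
    · -- commutativity
      intro p
      induction p using Quot.ind with
      | _ p =>
        obtain ⟨n, ⟨x, hx⟩, a⟩ := p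
        obtain ⟨m, α, hα, y, hy, hfac⟩ := exists_epi_mono_fact (fun i => f (x i))
        show FB X Y f (t X (hatMk A x hx a)) = t Y (FA X Y f (hatMk A x hx a))
        rw [ht, hFB X Y f n m x hx (τ n a) α hα y hy hfac,
          hFA X Y f n m x hx a α hα y hy hfac, ht, hτ]
    · -- weak lifting
      intro b c hbc
      induction b using Quot.ind with
      | _ b =>
        induction c using Quot.ind with
        | _ c =>
          obtain ⟨n, ⟨x, hx⟩, b'⟩ := b
          obtain ⟨m, ⟨y, hy⟩, a'⟩ := c
          obtain ⟨m', α, hα, y', hy', hfac⟩ := exists_epi_mono_fact (fun i => f (x i))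
          have heq : hatMk B y' hy' (B.map α hα b') = hatMk B y hy (τ m a') := by
            rw [← hFB X Y f n m' x hx b' α hα y' hy' hfac, ← ht]
            exact hbc
          obtain ⟨e, hyx, hb⟩ := (hatMk_eq_iff B y' hy' _ y hy _).mp heq
          have hcomp : B.map (⇑e ∘ α) (e.surjective.comp hα) b' = τ m a' :=
            (B.map_map α hα ⇑e e.surjective b').symm.trans hb
          obtain ⟨p, hp1, hp2⟩ :=
            (h n m (⇑e ∘ α) (e.surjective.comp hα)).2 b' a' hcomp
          refine ⟨hatMk A x hx p, ?_, ?_⟩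
          · show t X (hatMk A x hx p) = hatMk B x hx b'
            rw [ht, hp1]
          · show FA X Y f (hatMk A x hx p) = hatMk A y hy a'
            rw [hFA X Y f n m x hx p (⇑e ∘ α) (e.surjective.comp hα) y hy
              (fun i => (hfac i).trans (hyx (α i)).symm), hp2]
  · -- τ̂ weakly cartesian → τ weakly cartesian
    intro h n m f hf
    refine ⟨fun a => (hτ n m f hf a).symm, fun b a hba => ?_⟩
    have hidn : Function.Injective (id : Fin n → Fin n) := fun _ _ hh => hh
    have hidm : Function.Injective (id : Fin m → Fin m) := fun _ _ hh => hh
    obtain ⟨P, hP1, hP2⟩ := (h (Fin n) (Fin m) f).2 (hatMk B id hidn b)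
      (hatMk A id hidm a) (by
        rw [hFB (Fin n) (Fin m) f n m id hidn b f hf id hidm (fun i => rfl), ht, hba])
    obtain ⟨⟨k, ⟨x, hx⟩, p⟩, rfl⟩ := Quot.exists_rep P
    have hP1' : hatMk B x hx (τ k p) = hatMk B id hidn b := by
      rw [← ht]; exact hP1
    obtain ⟨e, hxe, hbe⟩ := (hatMk_eq_iff B x hx _ id hidn b).mp hP1'
    have hαs : Function.Surjective (f ∘ ⇑e) := hf.comp e.surjective
    have hP2' : hatMk A id hidm (A.map (f ∘ ⇑e) hαs p) = hatMk A id hidm a := by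
      rw [← hFA (Fin n) (Fin m) f k m x hx p (f ∘ ⇑e) hαs id hidm
        (fun i => (congrArg f (hxe i)).symm)]
      exact hP2
    obtain ⟨e', hide', hae'⟩ := (hatMk_eq_iff A id hidm _ id hidm a).mp hP2'
    refine ⟨A.map ⇑e e.surjective p, (hτ k n ⇑e e.surjective p).trans hbe, ?_⟩
    rw [A.map_map ⇑e e.surjective f hf p]
    exact ((A.map_congr (funext fun i => (hide' i : id (e' i) = i)) e'.surjective
      Function.surjective_id (A.map (f ∘ ⇑e) hαs p)).trans
        (A.map_id (A.map (f ∘ ⇑e) hαs p))).symm.trans hae'
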